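/- Let 0 → (ε) → R → R₀ → 0 be a small extension of local rings, meaning R is local with maximal ideal 𝔪 and 𝔪·ε = 0, and R₀ = R/(ε). Let M be an R-module. Then M is flat over R if and only if M ⊗_R R₀ is flat over R₀ and the natural map (ε) ⊗_R M → M is injective, assuming 𝔪 is nilpotent. -/

import Mathlib

open TensorProduct

section Aux

variable {R M : Type*} [CommRing R] [AddCommGroup M] [Module R M]

private lemma mulMap_congr_inj {A B : Ideal R} (h : A = B)
    (hB : Function.Injective (TensorProduct.lift ((LinearMap.lsmul R M).comp B.subtype))) :
    Function.Injective (TensorProduct.lift ((LinearMap.lsmul R M).comp A.subtype)) := by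
  subst h; exact hB

private lemma tensor_eq_zero_of_subsingleton {N : Type*} [AddCommGroup N] [Module R N]
    [Subsingleton N] (x : N ⊗[R] M) : x = 0 := by
  induction x using TensorProduct.induction_on with
  | zero => rfl
  | tmul n m => rw [Subsingleton.elim n 0, TensorProduct.zero_tmul]
  | add a b ha hb => rw [ha, hb, add_zero]

end Aux

set_option maxHeartbeats 1000000 in
/-- Flatness along a small extension: let `(R, 𝔪)` be a local ring with `𝔪` nilpotent,
`ε ∈ 𝔪` with `𝔪 ε = 0`, and `R₀ = R/(ε)`.  An `R`-module `M` is flat iff `R₀ ⊗[R] M` is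
flat over `R₀` and the multiplication map `(ε) ⊗[R] M → M` is injective. -/
theorem stmt9 {R M : Type*} [CommRing R] [IsLocalRing R]
    (hm : IsNilpotent (IsLocalRing.maximalIdeal R))
    (ε : R) (hε : ε ∈ IsLocalRing.maximalIdeal R)
    (hann : ∀ m ∈ IsLocalRing.maximalIdeal R, m * ε = 0)
    [AddCommGroup M] [Module R M] :
    Module.Flat R M ↔
      Module.Flat (R ⧸ Ideal.span {ε}) ((R ⧸ Ideal.span {ε}) ⊗[R] M) ∧
      Function.Injective
        (TensorProduct.lift
          ((LinearMap.lsmul R M).comp (Ideal.span {ε} : Ideal R).subtype)) := by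
  classical
  constructor
  · intro hf
    refine ⟨inferInstance, Module.Flat.iff_lift_lsmul_comp_subtype_injective.mp hf ⟨{ε}, by simp⟩⟩
  · rintro ⟨hflat, hinj⟩
    -- Every ideal contained in (ε) is ⊥ or (ε).
    have hsub : ∀ N : Ideal R, N ≤ Ideal.span {ε} → N = ⊥ ∨ N = Ideal.span {ε} := by
      intro N hN
      by_cases hbot : N = ⊥
      · exact Or.inl hbot
      right
      obtain ⟨x, hxN, hx0⟩ := Submodule.exists_mem_ne_zero_of_ne_bot hbot
      obtain ⟨r, hr⟩ := Ideal.mem_span_singleton'.mp (hN hxN)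
      have hru : IsUnit r := by
        by_contra hru
        exact hx0 (hr ▸ hann r ((IsLocalRing.mem_maximalIdeal r).mpr hru))
      refine le_antisymm hN ?_
      rw [Ideal.span_le, Set.singleton_subset_iff]
      obtain ⟨u, rfl⟩ := hru
      have hε' : ε = (↑u⁻¹ : R) * x := by
        rw [← hr, ← mul_assoc, Units.inv_mul, one_mul]
      rw [hε']
      exact N.mul_mem_left _ hxN
    rw [Module.Flat.iff_lift_lsmul_comp_subtype_injective]
    intro J hJ
    rw [injective_iff_map_eq_zero]
    intro x hx
    set I : Ideal R := Ideal.span {ε} with hI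
    set J' : Ideal (R ⧸ I) := J.map (Ideal.Quotient.mk I) with hJ'eq
    -- the map J → J'
    let qJ : J →ₗ[R] J' :=
      { toFun := fun a => ⟨Ideal.Quotient.mk I a.1, Ideal.mem_map_of_mem _ a.2⟩
        map_add' := fun a b => Subtype.ext (map_add _ _ _)
        map_smul' := fun r a => Subtype.ext (by
          simp [Algebra.smul_def, Ideal.Quotient.algebraMap_eq, smul_eq_mul]) }
    have hqJ : Function.Surjective qJ := by
      rintro ⟨y, hy⟩
      obtain ⟨a, haJ, rfl⟩ :=
        (Ideal.mem_map_iff_of_surjective _ Ideal.Quotient.mk_surjective).mp hy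
      exact ⟨⟨a, haJ⟩, rfl⟩
    let ι : ↥(J ⊓ I) →ₗ[R] ↥J := Submodule.inclusion inf_le_left
    have hex : Function.Exact ι qJ := by
      intro y
      constructor
      · intro hy
        have h1 : y.1 ∈ I :=
          Ideal.Quotient.eq_zero_iff_mem.mp (congrArg Subtype.val hy)
        exact ⟨⟨y.1, Submodule.mem_inf.mpr ⟨y.2, h1⟩⟩, rfl⟩
      · rintro ⟨z, rfl⟩
        exact Subtype.ext (Ideal.Quotient.eq_zero_iff_mem.mpr (Submodule.mem_inf.mp z.2).2)
    have hTex := rTensor_exact (f := ι) (g := qJ) M hex hqJ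
    -- flatness of the base change
    have hinj' : Function.Injective
        (TensorProduct.lift ((LinearMap.lsmul (R ⧸ I) ((R ⧸ I) ⊗[R] M)).comp J'.subtype)) :=
      Module.Flat.iff_lift_lsmul_comp_subtype_injective.mp hflat (Ideal.FG.map hJ _)
    set e := TensorProduct.AlgebraTensorModule.cancelBaseChange R (R ⧸ I) (R ⧸ I) ↥J' M with he
    -- key commutation
    have hcomm : ∀ z : ↥J ⊗[R] M,
        TensorProduct.lift ((LinearMap.lsmul (R ⧸ I) ((R ⧸ I) ⊗[R] M)).comp J'.subtype)
            (e.symm (LinearMap.rTensor M qJ z)) =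
          (1 : R ⧸ I) ⊗ₜ[R]
            (TensorProduct.lift ((LinearMap.lsmul R M).comp J.subtype) z) := by
      intro z
      induction z using TensorProduct.induction_on with
      | zero => simp
      | tmul j m =>
        rw [LinearMap.rTensor_tmul, he,
          TensorProduct.AlgebraTensorModule.cancelBaseChange_symm_tmul]
        simp only [TensorProduct.lift.tmul, LinearMap.coe_comp, Function.comp_apply,
          Submodule.coe_subtype, LinearMap.lsmul_apply, qJ, LinearMap.coe_mk, AddHom.coe_mk]
        rw [TensorProduct.smul_tmul', TensorProduct.tmul_smul, TensorProduct.smul_tmul']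
        simp [Algebra.smul_def, Ideal.Quotient.algebraMap_eq, smul_eq_mul]
      | add a b ha hb =>
        rw [map_add, map_add, map_add, map_add, TensorProduct.tmul_add, ha, hb]
    have h0 : e.symm (LinearMap.rTensor M qJ x) = 0 := by
      apply hinj'
      rw [hcomm x, hx, TensorProduct.tmul_zero, map_zero]
    have h1 : LinearMap.rTensor M qJ x = 0 := by
      have := congrArg e h0
      simpa using this
    obtain ⟨y, hy⟩ := (hTex x).mp h1
    have hμ : TensorProduct.lift ((LinearMap.lsmul R M).comp (J ⊓ I).subtype) y = 0 := by
      have hcompose : ∀ z : ↥(J ⊓ I) ⊗[R] M,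
          TensorProduct.lift ((LinearMap.lsmul R M).comp J.subtype)
              (LinearMap.rTensor M ι z) =
            TensorProduct.lift ((LinearMap.lsmul R M).comp (J ⊓ I).subtype) z := by
        intro z
        induction z using TensorProduct.induction_on with
        | zero => simp
        | tmul a m => simp [ι]
        | add a b ha hb => rw [map_add, map_add, map_add, ha, hb]
      rw [← hcompose, hy, hx]
    have hy0 : y = 0 := by
      rcases hsub (J ⊓ I) inf_le_right with h | h
      · haveI : Subsingleton ↥(J ⊓ I) := by
          refine ⟨fun a b => Subtype.ext ?_⟩
          have ha : (a : R) = 0 := (Submodule.mem_bot R).mp (h.le a.2)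
          have hb : (b : R) = 0 := (Submodule.mem_bot R).mp (h.le b.2)
          rw [ha, hb]
        exact tensor_eq_zero_of_subsingleton y
      · exact mulMap_congr_inj h hinj (hμ.trans (map_zero _).symm)
    rw [← hy, hy0, map_zero]
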